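/- Let θ₀ > 0, let t be a positive integer, and let β₁, …, β_{t+1} ∈ (0,1). Define α_i = 1 − β_i, ᾱ_i = ∏_{j=1}^i α_j, k_i = β_i/(α_i·θ₀²), θ_i = sqrt(ᾱ_i)·θ₀, and k̄_i = ∑_{j=1}^i k_j. Let ḡ_t ~ Γ(k̄_t, θ_t) and g_{t+1} ~ Γ(k_{t+1}, θ_{t+1}) be independent real random variables. Then sqrt(1 − β_{t+1})·ḡ_t + g_{t+1} has distribution Γ(k̄_{t+1}, θ_{t+1}). -/

import Mathlib

open MeasureTheory ProbabilityTheory Set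

section GammaDiffusionAux

lemma real_beta_eval {A B z : ℝ} (hA : 0 < A) (hB : 0 < B) (hz : 0 < z) :
    ∫ u in (0:ℝ)..z, u ^ (A - 1) * (z - u) ^ (B - 1) =
      z ^ (A + B - 1) * (Real.Gamma A * Real.Gamma B / Real.Gamma (A + B)) := by
  have hAB : 0 < A + B := by linarith
  have hΓ : Real.Gamma (A + B) ≠ 0 := (Real.Gamma_pos_of_pos hAB).ne'
  have hbeta : Complex.betaIntegral (A:ℂ) (B:ℂ) =
      ((Real.Gamma A * Real.Gamma B / Real.Gamma (A + B) : ℝ) : ℂ) := by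
    have h2 := Complex.Gamma_mul_Gamma_eq_betaIntegral (s := (A:ℂ)) (t := (B:ℂ))
      (by simpa using hA) (by simpa using hB)
    have hc : ((A:ℂ) + (B:ℂ)) = ((A + B : ℝ) : ℂ) := by push_cast; ring
    rw [hc, Complex.Gamma_ofReal, Complex.Gamma_ofReal, Complex.Gamma_ofReal] at h2
    have hΓc : ((Real.Gamma (A + B) : ℝ) : ℂ) ≠ 0 := Complex.ofReal_ne_zero.mpr hΓ
    rw [Complex.ofReal_div, Complex.ofReal_mul, eq_div_iff hΓc]
    linear_combination -h2
  have h1 := Complex.betaIntegral_scaled (A:ℂ) (B:ℂ) hz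
  have hleft : (∫ x in (0:ℝ)..z, (x:ℂ) ^ ((A:ℂ) - 1) * ((z:ℂ) - x) ^ ((B:ℂ) - 1))
      = ((∫ u in (0:ℝ)..z, u ^ (A - 1) * (z - u) ^ (B - 1) : ℝ) : ℂ) := by
    rw [← intervalIntegral.integral_ofReal]
    apply intervalIntegral.integral_congr
    intro x hx
    rw [uIcc_of_le hz.le] at hx
    have h1' : ((x ^ (A-1) : ℝ) : ℂ) = (x:ℂ) ^ ((A:ℂ) - 1) := by
      rw [Complex.ofReal_cpow hx.1 (A-1)]; push_cast; ring_nf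
    have h2' : (((z - x) ^ (B-1) : ℝ) : ℂ) = ((z:ℂ) - x) ^ ((B:ℂ) - 1) := by
      rw [Complex.ofReal_cpow (by linarith [hx.2] : (0:ℝ) ≤ z - x) (B-1)]; push_cast; ring_nf
    simp only
    rw [Complex.ofReal_mul, h1', h2']
  have hright : ((z:ℂ)) ^ ((A:ℂ) + (B:ℂ) - 1) = ((z ^ (A + B - 1) : ℝ) : ℂ) := by
    rw [Complex.ofReal_cpow hz.le]; push_cast; ring_nf
  apply Complex.ofReal_injective
  rw [← hleft, h1, hright, hbeta, ← Complex.ofReal_mul]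

lemma gammaPDF_conv {A B R : ℝ} (hA : 0 < A) (hB : 0 < B) (hR : 0 < R) {z : ℝ} (hz : z ≠ 0) :
    ∫⁻ u, gammaPDF A R u * gammaPDF B R (z - u) = gammaPDF (A + B) R z := by
  rcases lt_or_gt_of_ne hz with hneg | hpos
  · have h0 : ∀ u, gammaPDF A R u * gammaPDF B R (z - u) = 0 := by
      intro u
      rcases lt_or_ge u 0 with h | h
      · rw [gammaPDF_of_neg h, zero_mul]
      · rw [gammaPDF_of_neg (show z - u < 0 by linarith), mul_zero]
    simp [h0, gammaPDF_of_neg hneg]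
  · have hABΓ : Real.Gamma A ≠ 0 := (Real.Gamma_pos_of_pos hA).ne'
    have hBΓ : Real.Gamma B ≠ 0 := (Real.Gamma_pos_of_pos hB).ne'
    set C : ℝ := R ^ A * R ^ B / (Real.Gamma A * Real.Gamma B) * Real.exp (-(R * z)) with hC
    set q : ℝ → ℝ := fun u => u ^ (A - 1) * (z - u) ^ (B - 1) with hq
    -- pointwise identity for the real pdf product
    have hψ : ∀ u, gammaPDFReal A R u * gammaPDFReal B R (z - u)
        = Set.indicator (Icc 0 z) (fun u => C * q u) u := by
      intro u
      by_cases h0 : 0 ≤ u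
      · by_cases h1 : u ≤ z
        · rw [Set.indicator_of_mem (mem_Icc.mpr ⟨h0, h1⟩)]
          rw [gammaPDFReal, if_pos h0, gammaPDFReal, if_pos (by linarith : (0:ℝ) ≤ z - u)]
          have hexp : Real.exp (-(R * u)) * Real.exp (-(R * (z - u))) = Real.exp (-(R * z)) := by
            rw [← Real.exp_add]; ring_nf
          calc R ^ A / Real.Gamma A * u ^ (A - 1) * Real.exp (-(R * u)) *
                (R ^ B / Real.Gamma B * (z - u) ^ (B - 1) * Real.exp (-(R * (z - u))))
              = (Real.exp (-(R * u)) * Real.exp (-(R * (z - u)))) *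
                (R ^ A / Real.Gamma A * u ^ (A - 1)) *
                (R ^ B / Real.Gamma B * (z - u) ^ (B - 1)) := by ring
            _ = C * q u := by rw [hexp, hC, hq]; ring
        · have hzero : gammaPDFReal B R (z - u) = 0 := by
            rw [gammaPDFReal, if_neg (show ¬ (0:ℝ) ≤ z - u by push_neg; push_neg at h1; linarith)]
          have hnm : u ∉ Icc (0:ℝ) z := by
            simp only [mem_Icc, not_and, not_le]
            exact fun _ => lt_of_not_ge h1
          rw [Set.indicator_of_notMem hnm, hzero, mul_zero]
      · have hzero : gammaPDFReal A R u = 0 := by rw [gammaPDFReal, if_neg h0]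
        have hnm : u ∉ Icc (0:ℝ) z := by
          simp only [mem_Icc, not_and]
          exact fun h => absurd h h0
        rw [Set.indicator_of_notMem hnm, hzero, zero_mul]
    -- interval integrability of q on [0, z]
    have hcont1 : ContinuousOn (fun u : ℝ => (z - u) ^ (B - 1)) (uIcc 0 (z / 2)) := by
      rw [uIcc_of_le (by linarith)]
      apply ContinuousOn.rpow_const (continuous_const.sub continuous_id).continuousOn
      intro u hu
      refine Or.inl ?_
      simp only [mem_Icc] at hu
      simp only [Pi.sub_apply, id_eq]
      intro h; linarith [hu.2]
    have hcont2 : ContinuousOn (fun u : ℝ => u ^ (A - 1)) (uIcc (z / 2) z) := by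
      rw [uIcc_of_le (by linarith)]
      apply ContinuousOn.rpow_const continuousOn_id
      intro u hu
      refine Or.inl ?_
      simp only [mem_Icc] at hu
      simp only [id_eq]
      intro h; linarith [hu.1]
    have h1 : IntervalIntegrable q volume 0 (z / 2) :=
      (intervalIntegral.intervalIntegrable_rpow' (by linarith)).mul_continuousOn hcont1
    have h2 : IntervalIntegrable q volume (z / 2) z := by
      have base : IntervalIntegrable (fun u : ℝ => (z - u) ^ (B - 1)) volume (z / 2) z := by
        have := (intervalIntegral.intervalIntegrable_rpow' (a := 0) (b := z / 2)
          (by linarith : (-1:ℝ) < B - 1)).comp_sub_left z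
        have h' : z - z / 2 = z / 2 := by ring
        simpa [h'] using this.symm
      have := base.mul_continuousOn hcont2
      have heq : (fun u : ℝ => (z - u) ^ (B - 1) * u ^ (A - 1)) = q := by
        funext u; rw [hq]; ring
      rwa [heq] at this
    have hqint : IntegrableOn q (Icc 0 z) := by
      rw [integrableOn_Icc_iff_integrableOn_Ioc]
      exact (intervalIntegrable_iff_integrableOn_Ioc_of_le hpos.le).mp (h1.trans h2)
    have hint : Integrable (fun u => gammaPDFReal A R u * gammaPDFReal B R (z - u)) := by
      rw [funext hψ, integrable_indicator_iff measurableSet_Icc]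
      exact hqint.const_mul C
    have hnn : 0 ≤ᵐ[volume] fun u => gammaPDFReal A R u * gammaPDFReal B R (z - u) :=
      Filter.Eventually.of_forall fun u =>
        mul_nonneg (gammaPDFReal_nonneg hA hR u) (gammaPDFReal_nonneg hB hR (z - u))
    calc ∫⁻ u, gammaPDF A R u * gammaPDF B R (z - u)
        = ∫⁻ u, ENNReal.ofReal (gammaPDFReal A R u * gammaPDFReal B R (z - u)) := by
          simp_rw [gammaPDF, ENNReal.ofReal_mul (gammaPDFReal_nonneg hA hR _)]
      _ = ENNReal.ofReal (∫ u, gammaPDFReal A R u * gammaPDFReal B R (z - u)) :=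
          (ofReal_integral_eq_lintegral_ofReal hint hnn).symm
      _ = gammaPDF (A + B) R z := by
          rw [funext hψ, integral_indicator measurableSet_Icc,
            setIntegral_congr_set Ioc_ae_eq_Icc.symm,
            ← intervalIntegral.integral_of_le hpos.le, intervalIntegral.integral_const_mul,
            real_beta_eval hA hB hpos, gammaPDF_of_nonneg hpos.le]
          congr 1
          rw [hC]
          field_simp
          rw [← Real.rpow_add hR]

lemma gammaPDF_measurable (a r : ℝ) : Measurable (gammaPDF a r) :=
  (measurable_gammaPDFReal a r).ennreal_ofReal

lemma gammaPDF_scale {A R c : ℝ} (hA : 0 < A) (hR : 0 < R) (hc : 0 < c) (x : ℝ) :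
    ENNReal.ofReal c * gammaPDF A (R / c) (c * x) = gammaPDF A R x := by
  rcases lt_or_ge x 0 with h | h
  · rw [gammaPDF_of_neg h, gammaPDF_of_neg (by nlinarith : c * x < 0), mul_zero]
  · rw [gammaPDF_of_nonneg h, gammaPDF_of_nonneg (by positivity : (0:ℝ) ≤ c * x),
      ← ENNReal.ofReal_mul hc.le]
    congr 1
    have h1 : (R / c) * (c * x) = R * x := by field_simp
    have h2 : (R / c) ^ A = R ^ A / c ^ A := Real.div_rpow hR.le hc.le A
    have h3 : (c * x) ^ (A - 1) = c ^ (A - 1) * x ^ (A - 1) := Real.mul_rpow hc.le h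
    have h4 : c * c ^ (A - 1) = c ^ A := by
      nth_rewrite 1 [← Real.rpow_one c]
      rw [← Real.rpow_add hc]; ring_nf
    have h5 : (c : ℝ) ^ A ≠ 0 := by positivity
    have h6 : Real.Gamma A ≠ 0 := (Real.Gamma_pos_of_pos hA).ne'
    rw [h1, h2, h3, ← h4]
    field_simp
  
lemma gammaMeasure_scale {A R c : ℝ} (hA : 0 < A) (hR : 0 < R) (hc : 0 < c) :
    Measure.map (fun x => c * x) (gammaMeasure A R) = gammaMeasure A (R / c) := by
  ext s hs
  rw [Measure.map_apply (measurable_const_mul c) hs, gammaMeasure,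
    withDensity_apply _ (hs.preimage (measurable_const_mul c)), gammaMeasure,
    withDensity_apply _ hs]
  have hvol : (volume : Measure ℝ) = Measure.map (c * ·) ((ENNReal.ofReal c) • volume) := by
    rw [Measure.map_smul, Real.map_volume_mul_left (ne_of_gt hc), smul_smul,
      abs_of_pos (inv_pos.mpr hc), ← ENNReal.ofReal_mul hc.le, mul_inv_cancel₀ (ne_of_gt hc),
      ENNReal.ofReal_one, one_smul]
  conv_rhs => rw [hvol]
  rw [setLIntegral_map hs (gammaPDF_measurable A (R / c)) (measurable_const_mul c),
    Measure.restrict_smul, lintegral_smul_measure, smul_eq_mul,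
    ← lintegral_const_mul _ (Measurable.comp' (gammaPDF_measurable A (R / c)) (measurable_const_mul c))]
  exact setLIntegral_congr_fun (hs.preimage (measurable_const_mul c))
    (fun x _ => (gammaPDF_scale hA hR hc x).symm)

lemma gammaMeasure_conv {A B R : ℝ} (hA : 0 < A) (hB : 0 < B) (hR : 0 < R) :
    Measure.map (fun p : ℝ × ℝ => p.1 + p.2) ((gammaMeasure A R).prod (gammaMeasure B R))
      = gammaMeasure (A + B) R := by
  have hm : Measurable fun p : ℝ × ℝ => p.1 + p.2 := measurable_fst.add measurable_snd
  haveI : SFinite (gammaMeasure B R) :=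
    inferInstanceAs (SFinite (volume.withDensity (gammaPDF B R)))
  haveI : SFinite (gammaMeasure A R) :=
    inferInstanceAs (SFinite (volume.withDensity (gammaPDF A R)))
  ext s hs
  rw [Measure.map_apply hm hs, Measure.prod_apply (hm hs)]
  have key : ∀ x : ℝ, gammaMeasure B R (Prod.mk x ⁻¹' ((fun p : ℝ × ℝ => p.1 + p.2) ⁻¹' s))
      = ∫⁻ z in s, gammaPDF B R (z - x) := by
    intro x
    have hpre : (Prod.mk x ⁻¹' ((fun p : ℝ × ℝ => p.1 + p.2) ⁻¹' s)) = (fun y => x + y) ⁻¹' s :=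
      rfl
    rw [hpre, gammaMeasure, withDensity_apply _ (hs.preimage (measurable_const_add x))]
    have hvol : (volume : Measure ℝ) = Measure.map (fun y => x + y) volume :=
      (map_add_left_eq_self volume x).symm
    conv_rhs => rw [hvol]
    have hf : Measurable fun z : ℝ => gammaPDF B R (z - x) :=
      Measurable.comp' (gammaPDF_measurable B R) (measurable_id'.sub measurable_const)
    rw [setLIntegral_map hs hf (measurable_const_add x)]
    simp
  simp_rw [key]
  have hFmeas : Measurable fun x : ℝ => ∫⁻ z in s, gammaPDF B R (z - x) :=
    Measurable.lintegral_prod_right (by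
      rw [Function.uncurry_def]
      exact Measurable.comp' (gammaPDF_measurable B R) (measurable_snd.sub measurable_fst))
  rw [gammaMeasure, lintegral_withDensity_eq_lintegral_mul volume (gammaPDF_measurable A R) hFmeas]
  simp only [Pi.mul_apply]
  have hcm : ∀ x : ℝ, gammaPDF A R x * ∫⁻ z in s, gammaPDF B R (z - x)
      = ∫⁻ z in s, gammaPDF A R x * gammaPDF B R (z - x) := fun x =>
    (lintegral_const_mul _ (Measurable.comp' (gammaPDF_measurable B R)
      (measurable_id'.sub measurable_const))).symm
  simp_rw [hcm]
  rw [lintegral_lintegral_swap]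
  · rw [gammaMeasure, withDensity_apply _ hs]
    refine lintegral_congr_ae (ae_restrict_of_ae ?_)
    have h0 : ∀ᵐ z : ℝ, z ≠ 0 := by
      refine ae_iff.mpr ?_
      simp only [ne_eq, not_not]
      have : {a : ℝ | a = 0} = {(0:ℝ)} := by ext z; simp
      rw [this]
      exact Real.volume_singleton
    filter_upwards [h0] with z hz
    exact gammaPDF_conv hA hB hR hz
  · exact (Measurable.comp' (gammaPDF_measurable A R) measurable_fst |>.mul
      (Measurable.comp' (gammaPDF_measurable B R) (measurable_snd.sub measurable_fst))).aemeasurable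

end GammaDiffusionAux

/-- Let `θ₀ > 0`, `t ≥ 1`, `β₁, …, β_{t+1} ∈ (0,1)`, `α_i = 1 − β_i`, `ᾱ_i = ∏_{j=1}^i α_j`,
`k_i = β_i/(α_i·θ₀²)`, `θ_i = sqrt(ᾱ_i)·θ₀` and `k̄_i = ∑_{j=1}^i k_j`.  If
`ḡ ~ Γ(k̄_t, θ_t)` and `g ~ Γ(k_{t+1}, θ_{t+1})` are independent (Gamma with shape and
scale parameters, i.e. rate the inverse of the scale), then
`sqrt(1 − β_{t+1})·ḡ + g ~ Γ(k̄_{t+1}, θ_{t+1})`. -/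
theorem gamma_diffusion_step {Ω : Type*} [MeasureSpace Ω]
    [IsProbabilityMeasure (ℙ : Measure Ω)]
    (θ₀ : ℝ) (hθ₀ : 0 < θ₀) (t : ℕ) (ht : 0 < t)
    (β : ℕ → ℝ) (hβ : ∀ i, 1 ≤ i → i ≤ t + 1 → β i ∈ Set.Ioo (0 : ℝ) 1)
    (α : ℕ → ℝ) (hα : ∀ i, α i = 1 - β i)
    (αbar : ℕ → ℝ) (hαbar : ∀ i, αbar i = ∏ j ∈ Finset.Icc 1 i, α j)
    (k : ℕ → ℝ) (hk : ∀ i, k i = β i / (α i * θ₀ ^ 2))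
    (θ : ℕ → ℝ) (hθ : ∀ i, θ i = Real.sqrt (αbar i) * θ₀)
    (kbar : ℕ → ℝ) (hkbar : ∀ i, kbar i = ∑ j ∈ Finset.Icc 1 i, k j)
    (gbar g : Ω → ℝ) (hgbarm : Measurable gbar) (hgm : Measurable g)
    (hgbar : Measure.map gbar ℙ = gammaMeasure (kbar t) (θ t)⁻¹)
    (hg : Measure.map g ℙ = gammaMeasure (k (t + 1)) (θ (t + 1))⁻¹)
    (hindep : IndepFun gbar g ℙ) :
    Measure.map (fun ω => Real.sqrt (1 - β (t + 1)) * gbar ω + g ω) ℙ =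
      gammaMeasure (kbar (t + 1)) (θ (t + 1))⁻¹ := by
  set c : ℝ := Real.sqrt (1 - β (t + 1)) with hc_def
  have hβt1 := hβ (t + 1) (by omega) (le_refl _)
  have hαpos : ∀ i, 1 ≤ i → i ≤ t + 1 → 0 < α i := fun i h1 h2 => by
    rw [hα]; linarith [(hβ i h1 h2).2]
  have hαbar_pos : ∀ i, i ≤ t + 1 → 0 < αbar i := fun i h2 => by
    rw [hαbar]
    exact Finset.prod_pos fun j hj => hαpos j (Finset.mem_Icc.mp hj).1
      (le_trans (Finset.mem_Icc.mp hj).2 h2)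
  have hθpos : ∀ i, i ≤ t + 1 → 0 < θ i := fun i h => by
    rw [hθ]; exact mul_pos (Real.sqrt_pos.mpr (hαbar_pos i h)) hθ₀
  have hkpos : ∀ i, 1 ≤ i → i ≤ t + 1 → 0 < k i := fun i h1 h2 => by
    rw [hk]; exact div_pos (hβ i h1 h2).1 (mul_pos (hαpos i h1 h2) (by positivity))
  have hkbar_t : 0 < kbar t := by
    rw [hkbar]
    exact Finset.sum_pos (fun j hj => hkpos j (Finset.mem_Icc.mp hj).1
      (le_trans (Finset.mem_Icc.mp hj).2 (by omega))) ⟨1, Finset.mem_Icc.mpr ⟨le_refl 1, ht⟩⟩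
  have hkt1 : 0 < k (t + 1) := hkpos (t + 1) (by omega) (le_refl _)
  have hc : 0 < c := Real.sqrt_pos.mpr (by linarith [hβt1.2])
  have hθt : 0 < θ t := hθpos t (by omega)
  have hθt1 : 0 < θ (t + 1) := hθpos (t + 1) (le_refl _)
  have hθsucc : θ (t + 1) = c * θ t := by
    rw [hθ, hθ, hαbar (t + 1), Finset.prod_Icc_succ_top (by omega : 1 ≤ t + 1), ← hαbar t,
      Real.sqrt_mul (le_of_lt (hαbar_pos t (by omega))), hα (t + 1), hc_def]
    ring
  have hRscale : (θ t)⁻¹ / c = (θ (t + 1))⁻¹ := by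
    rw [hθsucc, mul_inv]
    field_simp
  have hkbarsucc : kbar (t + 1) = kbar t + k (t + 1) := by
    rw [hkbar, hkbar, Finset.sum_Icc_succ_top (by omega : 1 ≤ t + 1)]
  haveI : SFinite (gammaMeasure (kbar t) (θ t)⁻¹) :=
    inferInstanceAs (SFinite (volume.withDensity _))
  haveI : SFinite (gammaMeasure (k (t + 1)) (θ (t + 1))⁻¹) :=
    inferInstanceAs (SFinite (volume.withDensity _))
  have hpair : Measure.map (fun ω => (gbar ω, g ω)) ℙ
      = (Measure.map gbar ℙ).prod (Measure.map g ℙ) :=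
    (indepFun_iff_map_prod_eq_prod_map_map hgbarm.aemeasurable hgm.aemeasurable).mp hindep
  have hmsum : Measurable fun p : ℝ × ℝ => p.1 + p.2 := measurable_fst.add measurable_snd
  have hmf : Measurable fun p : ℝ × ℝ => c * p.1 + p.2 :=
    (measurable_fst.const_mul c).add measurable_snd
  calc Measure.map (fun ω => c * gbar ω + g ω) ℙ
      = Measure.map ((fun p : ℝ × ℝ => c * p.1 + p.2) ∘ fun ω => (gbar ω, g ω)) ℙ := rfl
    _ = Measure.map (fun p : ℝ × ℝ => c * p.1 + p.2)
          (Measure.map (fun ω => (gbar ω, g ω)) ℙ) :=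
        (Measure.map_map hmf (hgbarm.prodMk hgm)).symm
    _ = Measure.map (fun p : ℝ × ℝ => c * p.1 + p.2)
          ((gammaMeasure (kbar t) (θ t)⁻¹).prod (gammaMeasure (k (t + 1)) (θ (t + 1))⁻¹)) := by
        rw [hpair, hgbar, hg]
    _ = Measure.map ((fun p : ℝ × ℝ => p.1 + p.2) ∘ Prod.map (fun x : ℝ => c * x) (id : ℝ → ℝ))
          ((gammaMeasure (kbar t) (θ t)⁻¹).prod (gammaMeasure (k (t + 1)) (θ (t + 1))⁻¹)) := rfl
    _ = Measure.map (fun p : ℝ × ℝ => p.1 + p.2)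
          (Measure.map (Prod.map (fun x : ℝ => c * x) (id : ℝ → ℝ))
            ((gammaMeasure (kbar t) (θ t)⁻¹).prod (gammaMeasure (k (t + 1)) (θ (t + 1))⁻¹))) :=
        (Measure.map_map hmsum ((measurable_const_mul c).prodMap measurable_id)).symm
    _ = Measure.map (fun p : ℝ × ℝ => p.1 + p.2)
          ((Measure.map (fun x : ℝ => c * x) (gammaMeasure (kbar t) (θ t)⁻¹)).prod
            (Measure.map (id : ℝ → ℝ) (gammaMeasure (k (t + 1)) (θ (t + 1))⁻¹))) := by
        rw [Measure.map_prod_map _ _ (measurable_const_mul c) measurable_id]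
    _ = Measure.map (fun p : ℝ × ℝ => p.1 + p.2)
          ((gammaMeasure (kbar t) ((θ (t + 1))⁻¹)).prod
            (gammaMeasure (k (t + 1)) (θ (t + 1))⁻¹)) := by
        rw [Measure.map_id, gammaMeasure_scale hkbar_t (inv_pos.mpr hθt) hc, hRscale]
    _ = gammaMeasure (kbar (t + 1)) (θ (t + 1))⁻¹ := by
        rw [gammaMeasure_conv hkbar_t hkt1 (inv_pos.mpr hθt1), ← hkbarsucc]
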